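/- First-order Neumann asymptote of M₁: with Q := I - X(XᵀX)⁻¹Xᵀ and N := KQ, the difference η·M₁ - Q·(I - η⁻¹N + η⁻²N²) has operator norm O(η⁻³·λ_n³) as η → ∞, where λ_n = ‖K‖; more precisely, for η > λ_n, ‖η·M₁(η) - Q(I - η⁻¹N + η⁻²N²)‖ ≤ C·λ_n³/η³ for a constant C depending only on n, m, and the conditioning of X. -/

import Mathlib

open Matrix
open scoped Matrix.Norms.L2Operator

section AuxLemmas

lemma mulVec_inj_of_rank {n m : ℕ} {X : Matrix (Fin n) (Fin m) ℝ} (hX : X.rank = m) :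
    Function.Injective X.mulVec := by
  rw [Matrix.mulVec_injective_iff]
  rw [Matrix.rank_eq_finrank_span_cols] at hX
  rw [linearIndependent_iff_card_eq_finrank_span]
  simpa [Set.finrank] using hX.symm

lemma posdef_conj {n m : ℕ} {B : Matrix (Fin n) (Fin n) ℝ} (hB : B.PosDef)
    {X : Matrix (Fin n) (Fin m) ℝ} (hX : Function.Injective X.mulVec) :
    (Xᵀ * B * X).PosDef := by
  refine Matrix.PosDef.of_dotProduct_mulVec_pos ?_ fun x hx => ?_
  · have hBs : Bᵀ = B := hB.1
    simp [Matrix.IsHermitian, Matrix.conjTranspose_eq_transpose_of_trivial,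
      Matrix.transpose_mul, hBs, Matrix.mul_assoc]
  · have hXx : X *ᵥ x ≠ 0 := by
      intro h
      exact hx (hX (by simpa using h))
    have := hB.dotProduct_mulVec_pos hXx
    rw [star_trivial] at this ⊢
    calc (0:ℝ) < (X *ᵥ x) ⬝ᵥ (B *ᵥ (X *ᵥ x)) := this
      _ = x ⬝ᵥ ((Xᵀ * B * X) *ᵥ x) := by
          rw [← Matrix.mulVec_mulVec, ← Matrix.mulVec_mulVec,
            Matrix.dotProduct_mulVec x Xᵀ _, ← Matrix.mulVec_transpose]
          simp

lemma smul_one_posdef {n : ℕ} {η : ℝ} (hη : 0 < η) :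
    (η • (1 : Matrix (Fin n) (Fin n) ℝ)).PosDef := by
  refine Matrix.PosDef.of_dotProduct_mulVec_pos ?_ fun x hx => ?_
  · simp [Matrix.IsHermitian]
  · rw [star_trivial]
    simp only [Matrix.smul_mulVec, Matrix.one_mulVec, dotProduct_smul, smul_eq_mul]
    have : 0 < x ⬝ᵥ x := by
      rcases (dotProduct_self_star_nonneg x).eq_or_lt with h | h
      · exact absurd (dotProduct_self_star_eq_zero.mp (by simpa using h.symm)) hx
      · simpa using h
    positivity


lemma psd_smul {n : ℕ} {H : Matrix (Fin n) (Fin n) ℝ} (hH : H.PosSemidef) {c : ℝ} (hc : 0 ≤ c) :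
    (c • H).PosSemidef := by
  refine Matrix.PosSemidef.of_dotProduct_mulVec_nonneg ?_ fun x => ?_
  · simpa [Matrix.IsHermitian] using congrArg (c • ·) hH.1
  · have := hH.dotProduct_mulVec_nonneg x
    simp only [Matrix.smul_mulVec, dotProduct_smul, smul_eq_mul]
    positivity

lemma opNorm_le_of_posSemidef {n : ℕ} {H : Matrix (Fin n) (Fin n) ℝ} (hH : H.PosSemidef)
    {c : ℝ} (hc : 0 ≤ c) (h2 : (c • H - H * H).PosSemidef) : ‖H‖ ≤ c := by
  rw [Matrix.l2_opNorm_def]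
  refine ContinuousLinearMap.opNorm_le_bound _ hc fun x => ?_
  set v : Fin n → ℝ := (WithLp.equiv 2 _) x with hv
  have happ : ((Matrix.toEuclideanLin.trans LinearMap.toContinuousLinearMap) H) x
      = (WithLp.equiv 2 (Fin n → ℝ)).symm (H *ᵥ v) := rfl
  rw [happ]
  set b : EuclideanSpace ℝ (Fin n) := (WithLp.equiv 2 (Fin n → ℝ)).symm (H *ᵥ v) with hb
  have hsq : ‖b‖ ^ 2 = (H *ᵥ v) ⬝ᵥ (H *ᵥ v) := by
    rw [← real_inner_self_eq_norm_sq, hb, WithLp.equiv_symm_apply, EuclideanSpace.inner_toLp_toLp,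
      star_trivial]
  have hHsym : Hᵀ = H := hH.1
  have key2 : (H *ᵥ v) ⬝ᵥ (H *ᵥ v) ≤ c * (v ⬝ᵥ (H *ᵥ v)) := by
    have h0 := h2.dotProduct_mulVec_nonneg v
    rw [star_trivial, Matrix.sub_mulVec, dotProduct_sub, Matrix.smul_mulVec,
      dotProduct_smul, ← Matrix.mulVec_mulVec, smul_eq_mul, sub_nonneg] at h0
    calc (H *ᵥ v) ⬝ᵥ (H *ᵥ v) = v ⬝ᵥ (H *ᵥ (H *ᵥ v)) := by
          rw [Matrix.dotProduct_mulVec v H (H *ᵥ v), ← Matrix.mulVec_transpose, hHsym]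
      _ ≤ c * (v ⬝ᵥ (H *ᵥ v)) := h0
  have key3 : v ⬝ᵥ (H *ᵥ v) ≤ ‖x‖ * ‖b‖ := by
    have : (inner ℝ x b : ℝ) = v ⬝ᵥ (H *ᵥ v) := by
      rw [hb, hv]
      rw [show x = (WithLp.equiv 2 (Fin n → ℝ)).symm ((WithLp.equiv 2 _) x) by simp]
      rw [WithLp.equiv_symm_apply, EuclideanSpace.inner_toLp_toLp, star_trivial]
      simp [dotProduct_comm]
    calc v ⬝ᵥ (H *ᵥ v) = (inner ℝ x b : ℝ) := this.symm
      _ ≤ ‖x‖ * ‖b‖ := real_inner_le_norm x b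
  have hbn : 0 ≤ ‖b‖ := norm_nonneg b
  rcases hbn.eq_or_lt with h | h
  · rw [← h]; positivity
  · have : ‖b‖ * ‖b‖ ≤ (c * ‖x‖) * ‖b‖ := by
      calc ‖b‖ * ‖b‖ = ‖b‖ ^ 2 := (sq ‖b‖).symm
        _ ≤ c * (v ⬝ᵥ (H *ᵥ v)) := hsq ▸ key2
        _ ≤ c * (‖x‖ * ‖b‖) := by nlinarith
        _ = (c * ‖x‖) * ‖b‖ := by ring
    exact le_of_mul_le_mul_right this h

end AuxLemmas

theorem M1_neumann_asymptote {n m : ℕ}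
    (K : Matrix (Fin n) (Fin n) ℝ) (hK : K.PosSemidef)
    (X : Matrix (Fin n) (Fin m) ℝ) (hX : X.rank = m) :
    let Q : Matrix (Fin n) (Fin n) ℝ := 1 - X * (Xᵀ * X)⁻¹ * Xᵀ
    let N : Matrix (Fin n) (Fin n) ℝ := K * Q
    let M₁ : ℝ → Matrix (Fin n) (Fin n) ℝ := fun η =>
      (K + η • 1)⁻¹
        - (K + η • 1)⁻¹ * X * (Xᵀ * (K + η • 1)⁻¹ * X)⁻¹ * Xᵀ * (K + η • 1)⁻¹
    ∃ C : ℝ, 0 < C ∧ ∀ η : ℝ, ‖K‖ < η →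
      ‖η • M₁ η - Q * (1 - η⁻¹ • N + (η⁻¹) ^ 2 • N ^ 2)‖ ≤ C * ‖K‖ ^ 3 / η ^ 3 := by
  intro Q N M₁
  have hXinj : Function.Injective X.mulVec := mulVec_inj_of_rank hX
  refine ⟨1, one_pos, fun η hη => ?_⟩
  have hη0 : 0 < η := lt_of_le_of_lt (norm_nonneg K) hη
  have hηne : η ≠ 0 := ne_of_gt hη0
  -- basic matrices
  have hA : (K + η • (1 : Matrix (Fin n) (Fin n) ℝ)).PosDef :=
    Matrix.PosDef.posSemidef_add hK (smul_one_posdef hη0)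
  set Ai : Matrix (Fin n) (Fin n) ℝ := (K + η • 1)⁻¹ with hAidef
  have hAinv : Ai.PosDef := hA.inv
  have hS : (Xᵀ * Ai * X).PosDef := posdef_conj hAinv hXinj
  set S : Matrix (Fin m) (Fin m) ℝ := Xᵀ * Ai * X with hSdef
  have hXtX : (Xᵀ * X).PosDef := by
    have := posdef_conj (Matrix.PosDef.one : (1 : Matrix (Fin n) (Fin n) ℝ).PosDef) hXinj
    rwa [Matrix.mul_one] at this
  -- inverses
  have hAAi : (K + η • (1 : Matrix (Fin n) (Fin n) ℝ)) * Ai = 1 :=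
    Matrix.mul_nonsing_inv _ (isUnit_iff_ne_zero.mpr hA.det_pos.ne')
  have hAiA : Ai * (K + η • (1 : Matrix (Fin n) (Fin n) ℝ)) = 1 :=
    Matrix.nonsing_inv_mul _ (isUnit_iff_ne_zero.mpr hA.det_pos.ne')
  have hSS : S * S⁻¹ = 1 := Matrix.mul_nonsing_inv _ (isUnit_iff_ne_zero.mpr hS.det_pos.ne')
  have hXtXi : (Xᵀ * X)⁻¹ * (Xᵀ * X) = 1 :=
    Matrix.nonsing_inv_mul _ (isUnit_iff_ne_zero.mpr hXtX.det_pos.ne')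
  -- definitional equations
  have hQdef : Q = 1 - X * (Xᵀ * X)⁻¹ * Xᵀ := rfl
  have hNdef : N = K * Q := rfl
  have hMdef : M₁ η = Ai - Ai * X * S⁻¹ * Xᵀ * Ai := rfl
  set M : Matrix (Fin n) (Fin n) ℝ := M₁ η with hM
  -- basic projection identities
  have hQX : Q * X = 0 := by
    rw [hQdef, Matrix.sub_mul, Matrix.one_mul, Matrix.mul_assoc (X * (Xᵀ * X)⁻¹) Xᵀ X,
      Matrix.mul_assoc X (Xᵀ * X)⁻¹ (Xᵀ * X), hXtXi, Matrix.mul_one, sub_self]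
  have hQt : Qᵀ = Q := by
    rw [hQdef]
    simp [Matrix.transpose_sub, Matrix.transpose_mul, Matrix.transpose_nonsing_inv,
      Matrix.mul_assoc]
  have hXM : Xᵀ * M = 0 := by
    rw [hMdef, Matrix.mul_sub]
    have : Xᵀ * (Ai * X * S⁻¹ * Xᵀ * Ai) = Xᵀ * Ai := by
      calc Xᵀ * (Ai * X * S⁻¹ * Xᵀ * Ai) = ((Xᵀ * Ai * X) * S⁻¹) * (Xᵀ * Ai) := by
            simp only [Matrix.mul_assoc]
        _ = Xᵀ * Ai := by rw [← hSdef, hSS, Matrix.one_mul]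
    rw [this, sub_self]
  have hMt : Mᵀ = M := by
    have hSt0 : Sᵀ = S := hS.1
    have hAit : Aiᵀ = Ai := hAinv.1
    have hSt : (S⁻¹)ᵀ = S⁻¹ := by
      rw [Matrix.transpose_nonsing_inv, hSt0]
    rw [hMdef]
    simp [Matrix.transpose_sub, Matrix.transpose_mul, hSt, hAit, Matrix.mul_assoc]
  have hMX : M * X = 0 := by
    have := congrArg Matrix.transpose hXM
    rwa [Matrix.transpose_mul, Matrix.transpose_transpose, hMt, Matrix.transpose_zero] at this
  have hMQ : M * Q = M := by
    rw [hQdef, Matrix.mul_sub, Matrix.mul_one, ← Matrix.mul_assoc, ← Matrix.mul_assoc, hMX,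
      Matrix.zero_mul, Matrix.zero_mul, sub_zero]
  have hAM : (K + η • (1 : Matrix (Fin n) (Fin n) ℝ)) * M = 1 - X * S⁻¹ * Xᵀ * Ai := by
    rw [hMdef, Matrix.mul_sub, hAAi]
    congr 1
    calc (K + η • (1 : Matrix (Fin n) (Fin n) ℝ)) * (Ai * X * S⁻¹ * Xᵀ * Ai)
        = ((K + η • 1) * Ai) * (X * S⁻¹ * Xᵀ * Ai) := by simp only [Matrix.mul_assoc]
      _ = X * S⁻¹ * Xᵀ * Ai := by rw [hAAi, Matrix.one_mul]
  have hQAM : Q * ((K + η • (1 : Matrix (Fin n) (Fin n) ℝ)) * M) = Q := by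
    rw [hAM, Matrix.mul_sub, Matrix.mul_one]
    have : Q * (X * S⁻¹ * Xᵀ * Ai) = 0 := by
      calc Q * (X * S⁻¹ * Xᵀ * Ai) = (Q * X) * (S⁻¹ * Xᵀ * Ai) := by
            simp only [Matrix.mul_assoc]
        _ = 0 := by rw [hQX, Matrix.zero_mul]
    rw [this, sub_zero]
  have hMAQ : M * ((K + η • (1 : Matrix (Fin n) (Fin n) ℝ)) * Q) = Q := by
    have hAt : (K + η • (1 : Matrix (Fin n) (Fin n) ℝ))ᵀ = K + η • 1 := hA.1
    have := congrArg Matrix.transpose hQAM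
    rw [Matrix.transpose_mul, Matrix.transpose_mul, hMt, hQt, hAt] at this
    rwa [Matrix.mul_assoc] at this
  -- the key recursion
  have hkey : η • M = Q - M * N := by
    have h1 : (K + η • (1 : Matrix (Fin n) (Fin n) ℝ)) * Q = K * Q + η • Q := by
      rw [add_mul, Matrix.smul_mul, Matrix.one_mul]
    have h2 : M * (K * Q + η • Q) = M * N + η • M := by
      rw [Matrix.mul_add, mul_smul_comm, hMQ, ← hNdef]
    have := hMAQ
    rw [h1, h2] at this
    rw [← this]; abel
  -- exact error formula
  have hQeq : Q = η • M + M * N := sub_eq_iff_eq_add.mp hkey.symm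
  have hG : η • M - Q * (1 - η⁻¹ • N + (η⁻¹) ^ 2 • N ^ 2) = -((η⁻¹) ^ 2 • (M * N ^ 3)) := by
    rw [hQeq]
    simp only [pow_succ, pow_zero, one_mul, Matrix.one_mul]
    simp only [Matrix.mul_add, Matrix.add_mul, Matrix.mul_sub, Matrix.sub_mul, Matrix.mul_one,
      mul_smul_comm, smul_mul_assoc, smul_smul, Matrix.mul_assoc, smul_sub, smul_add]
    match_scalars <;> field_simp <;> ring
  -- idempotence and psd of Q
  have hQQ : Q * Q = Q := by
    nth_rewrite 2 [hQdef]
    rw [Matrix.mul_sub, Matrix.mul_one, ← Matrix.mul_assoc, ← Matrix.mul_assoc, hQX,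
      Matrix.zero_mul, Matrix.zero_mul, sub_zero]
  have hQpsd : Q.PosSemidef := by
    have h := Matrix.posSemidef_self_mul_conjTranspose Q
    have hQH : Qᴴ = Q := hQt
    rwa [hQH, hQQ] at h
  have hQnorm : ‖Q‖ ≤ 1 :=
    opNorm_le_of_posSemidef hQpsd zero_le_one
      (by rw [one_smul, hQQ, sub_self]; exact Matrix.PosSemidef.zero)
  -- psd and norm bound for M
  have hMAM : M * ((K + η • (1 : Matrix (Fin n) (Fin n) ℝ)) * M) = M := by
    rw [hAM, Matrix.mul_sub, Matrix.mul_one]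
    have h0 : M * (X * S⁻¹ * Xᵀ * Ai) = 0 := by
      calc M * (X * S⁻¹ * Xᵀ * Ai) = (M * X) * (S⁻¹ * (Xᵀ * Ai)) := by
            simp only [Matrix.mul_assoc]
        _ = 0 := by rw [hMX, Matrix.zero_mul]
    rw [h0, sub_zero]
  have hMpsd : M.PosSemidef := by
    have h := Matrix.PosSemidef.mul_mul_conjTranspose_same hA.posSemidef M
    have hMH : Mᴴ = M := hMt
    rwa [hMH, Matrix.mul_assoc, hMAM] at h
  have hMKM : (M * K * M).PosSemidef := by
    have h := Matrix.PosSemidef.mul_mul_conjTranspose_same hK M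
    have hMH : Mᴴ = M := hMt
    rwa [hMH] at h
  have hMsq : M - η • (M * M) = M * K * M := by
    have h1 : (K + η • (1 : Matrix (Fin n) (Fin n) ℝ)) * M = K * M + η • M := by
      rw [Matrix.add_mul, Matrix.smul_mul, Matrix.one_mul]
    have h2 := hMAM
    rw [h1, Matrix.mul_add, mul_smul_comm, ← Matrix.mul_assoc] at h2
    exact (eq_sub_of_add_eq h2).symm
  have hMnorm : ‖M‖ ≤ η⁻¹ := by
    refine opNorm_le_of_posSemidef hMpsd (inv_nonneg.mpr hη0.le) ?_
    have h0 : η⁻¹ • (M - η • (M * M)) = η⁻¹ • M - M * M := by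
      rw [smul_sub, smul_smul, inv_mul_cancel₀ hηne, one_smul]
    rw [← h0, hMsq]
    exact psd_smul hMKM (inv_nonneg.mpr hη0.le)
  -- norm of N
  have hNn : ‖N‖ ≤ ‖K‖ := by
    rw [hNdef]
    calc ‖K * Q‖ ≤ ‖K‖ * ‖Q‖ := norm_mul_le _ _
      _ ≤ ‖K‖ * 1 := mul_le_mul_of_nonneg_left hQnorm (norm_nonneg K)
      _ = ‖K‖ := mul_one _
  -- conclude
  rw [hG, norm_neg, norm_smul, Real.norm_of_nonneg (sq_nonneg (η⁻¹))]
  calc (η⁻¹) ^ 2 * ‖M * N ^ 3‖ ≤ (η⁻¹) ^ 2 * (η⁻¹ * ‖K‖ ^ 3) := by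
        have h3 : ‖N ^ 3‖ ≤ ‖K‖ ^ 3 :=
          le_trans (norm_pow_le' N (by norm_num)) (pow_le_pow_left₀ (norm_nonneg N) hNn 3)
        have h4 : ‖M * N ^ 3‖ ≤ η⁻¹ * ‖K‖ ^ 3 :=
          le_trans (norm_mul_le M (N ^ 3))
            (mul_le_mul hMnorm h3 (norm_nonneg _) (inv_nonneg.mpr hη0.le))
        exact mul_le_mul_of_nonneg_left h4 (sq_nonneg _)
    _ = 1 * ‖K‖ ^ 3 / η ^ 3 := by
        rw [one_mul, div_eq_mul_inv, ← mul_assoc, ← pow_succ, inv_pow, mul_comm]
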